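/- If for all n ≥ c the inequality (c/n)·((c-1)/c)^{ρ/2} + ((n-c)/n)·((c+1)/c)^{ρ/2} ≤ (1+ε)^ρ·((n-1)/n)^{ρ/2} holds, then ((c+1)/c)^{ρ/2} ≤ (1+ε)^ρ, and hence c ≥ 1/(2ε + ε²). -/
import Mathlib

theorem simplex_coreset_lower_bound_limit (c : ℕ) (hc : 1 ≤ c) (ρ : ℝ) (hρ : 1 ≤ ρ)
    (ε : ℝ) (hε0 : 0 < ε) (hε1 : ε ≤ 1)
    (h : ∀ n : ℕ, c ≤ n →
      ((c : ℝ)/n) * (((c - 1 : ℝ)/c) ^ (ρ/2))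
        + (((n : ℝ) - c)/n) * (((c + 1 : ℝ)/c) ^ (ρ/2))
      ≤ (1 + ε) ^ ρ * (((n - 1 : ℝ)/n) ^ (ρ/2))) :
    ((c + 1 : ℝ)/c) ^ (ρ/2) ≤ (1 + ε) ^ ρ ∧ (1 / (2*ε + ε^2) : ℝ) ≤ c := by
  have hc0 : (0:ℝ) < c := by exact_mod_cast hc
  set A : ℝ := ((c + 1 : ℝ)/c) ^ (ρ/2) with hA
  have hA0 : 0 ≤ A := Real.rpow_nonneg (by positivity) _
  -- key bound for each n ≥ c
  have key : ∀ n : ℕ, c ≤ n → (((n : ℝ) - c)/n) * A ≤ (1 + ε) ^ ρ := by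
    intro n hn
    have hn0 : (0:ℝ) < n := lt_of_lt_of_le hc0 (by exact_mod_cast hn)
    have h1 : (0:ℝ) ≤ ((c : ℝ)/n) * (((c - 1 : ℝ)/c) ^ (ρ/2)) := by
      have : (0:ℝ) ≤ ((c - 1 : ℝ)/c) := by
        apply div_nonneg _ hc0.le
        have : (1:ℝ) ≤ c := by exact_mod_cast hc
        linarith
      have := Real.rpow_nonneg this (ρ/2)
      positivity
    have h2 : (((n : ℝ) - 1)/n) ^ (ρ/2) ≤ 1 := by
      apply Real.rpow_le_one _ _ (by positivity)
      · apply div_nonneg _ hn0.le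
        have : (1:ℝ) ≤ n := by exact_mod_cast le_trans hc hn
        linarith
      · apply div_le_one_of_le₀ (by linarith) hn0.le
    have h3 : (0:ℝ) ≤ (1 + ε) ^ ρ := Real.rpow_nonneg (by linarith) _
    calc (((n : ℝ) - c)/n) * A ≤ (1 + ε) ^ ρ * (((n : ℝ) - 1)/n) ^ (ρ/2) := by
          have := h n hn; linarith
      _ ≤ (1 + ε) ^ ρ * 1 := by nlinarith
      _ = (1 + ε) ^ ρ := by ring
  -- take limit n → ∞
  have hlim : Filter.Tendsto (fun n : ℕ => (((n : ℝ) - c)/n) * A) Filter.atTop (nhds A) := by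
    have h1 : Filter.Tendsto (fun n : ℕ => ((c:ℝ)/n)) Filter.atTop (nhds 0) :=
      tendsto_const_div_atTop_nhds_zero_nat _
    have h2 : Filter.Tendsto (fun n : ℕ => (1 - (c:ℝ)/n) * A) Filter.atTop (nhds ((1 - 0) * A)) :=
      ((tendsto_const_nhds.sub h1).mul tendsto_const_nhds)
    rw [show ((1:ℝ) - 0) * A = A by ring] at h2
    apply h2.congr'
    filter_upwards [Filter.eventually_gt_atTop 0] with n hn
    have hn0 : (0:ℝ) < n := by exact_mod_cast hn
    field_simp
  have hfirst : A ≤ (1 + ε) ^ ρ := by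
    apply le_of_tendsto hlim
    filter_upwards [Filter.eventually_ge_atTop c] with n hn using key n hn
  refine ⟨hfirst, ?_⟩
  -- derive (c+1)/c ≤ (1+ε)^2
  have heq : (1 + ε) ^ ρ = (((1 + ε)^2 : ℝ)) ^ (ρ/2) := by
    rw [show ((1+ε)^2 : ℝ) = (1+ε) ^ (2:ℝ) by
        rw [← Real.rpow_natCast (1+ε) 2]; norm_num,
      ← Real.rpow_mul (by linarith)]
    ring_nf
  have hbase : ((c + 1 : ℝ)/c) ≤ (1 + ε)^2 := by
    rw [heq] at hfirst
    exact (Real.rpow_le_rpow_iff (by positivity) (by positivity) (by linarith)).mp hfirst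
  have h1c : (1:ℝ)/c ≤ 2*ε + ε^2 := by
    have : ((c + 1 : ℝ)/c) = 1 + 1/c := by field_simp
    rw [this] at hbase; nlinarith
  have hd : (0:ℝ) < 2*ε + ε^2 := by positivity
  rw [div_le_iff₀ hd]
  rw [div_le_iff₀ hc0] at h1c
  nlinarith
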